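/- Let p be a prime and a_i ∈ ℤ_p[[w]] for i ≥ 0 with a_0 = 1, μ(a_{i_{k-1}}) = 0 and μ(a_i) = 0 for some indices i_{k-1} < i_k ≤ i. Suppose r' > 0 is such that all roots of a_{i_{k-1}}, a_{i_k}, a_i in the open unit disc have valuation ≥ r', and suppose that for all w_0 with 0 < v_p(w_0) < r' the inequality (v_p(a_{i_k}(w_0)) − v_p(a_{i_{k-1}}(w_0)))/(i_k − i_{k-1}) ≤ (v_p(a_i(w_0)) − v_p(a_{i_{k-1}}(w_0)))/(i − i_{k-1}) holds. Then μ(a_{i_k}) = 0. -/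

import Mathlib

open PowerSeries Real

section Aux

variable {p : ℕ} [Fact p.Prime]
variable {K : Type*} [NontriviallyNormedField K] [CompleteSpace K] [IsAlgClosed K]
  [Algebra ℚ_[p] K]

lemma aux_norm_finset_sum (hna : ∀ x y : K, ‖x + y‖ ≤ max ‖x‖ ‖y‖)
    {ι : Type*} (s : Finset ι) (f : ι → K) (c : ℝ) (hc : 0 ≤ c)
    (h : ∀ i ∈ s, ‖f i‖ ≤ c) : ‖∑ i ∈ s, f i‖ ≤ c := by
  classical
  induction s using Finset.cons_induction with
  | empty => simpa using hc
  | cons i s his ih =>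
    rw [Finset.sum_cons]
    refine le_trans (hna _ _) (max_le (h i (by simp)) (ih fun j hj => h j (by simp [hj])))

lemma aux_norm_tsum_le (hna : ∀ x y : K, ‖x + y‖ ≤ max ‖x‖ ‖y‖)
    (f : ℕ → K) (hf : Summable f) (c : ℝ) (hc : 0 ≤ c)
    (h : ∀ n, ‖f n‖ ≤ c) : ‖∑' n, f n‖ ≤ c := by
  refine le_of_tendsto' ((continuous_norm.tendsto _).comp hf.hasSum) ?_
  intro s
  exact aux_norm_finset_sum hna s f c hc fun i _ => h i

lemma aux_norm_add_eq (hna : ∀ x y : K, ‖x + y‖ ≤ max ‖x‖ ‖y‖)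
    {x y : K} (h : ‖y‖ < ‖x‖) : ‖x + y‖ = ‖x‖ := by
  refine le_antisymm (le_trans (hna _ _) (max_le le_rfl h.le)) ?_
  have key := hna (x + y) (-y)
  rw [norm_neg, add_neg_cancel_right] at key
  rcases le_max_iff.mp key with h1 | h1
  · exact h1
  · exact absurd h1 (not_le.mpr h)

lemma aux_summable (hnorm : ∀ x : ℚ_[p], ‖algebraMap ℚ_[p] K x‖ = ‖x‖)
    (f : PowerSeries ℤ_[p]) (w : K) (hw : ‖w‖ < 1) :
    Summable (fun n : ℕ =>
      algebraMap ℚ_[p] K ((PowerSeries.coeff n f : ℤ_[p]) : ℚ_[p]) * w ^ n) := by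
  refine Summable.of_norm_bounded (summable_geometric_of_lt_one (norm_nonneg w) hw) ?_
  intro n
  rw [norm_mul, norm_pow, hnorm, ← PadicInt.norm_def]
  exact mul_le_of_le_one_left (pow_nonneg (norm_nonneg w) n) (PadicInt.norm_le_one _)

lemma aux_dvd_iff (f : PowerSeries ℤ_[p]) :
    (p : PowerSeries ℤ_[p]) ∣ f ↔ ∀ n, (p : ℤ_[p]) ∣ PowerSeries.coeff n f := by
  have hC : (p : PowerSeries ℤ_[p]) = PowerSeries.C (p : ℤ_[p]) := by
    simp [map_natCast]
  constructor
  · rintro ⟨g, rfl⟩ n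
    rw [hC, PowerSeries.coeff_C_mul]
    exact ⟨PowerSeries.coeff n g, rfl⟩
  · intro h
    refine ⟨PowerSeries.mk fun n => (h n).choose, ?_⟩
    ext n
    rw [hC, PowerSeries.coeff_C_mul, PowerSeries.coeff_mk]
    exact (h n).choose_spec

end Aux

section Aux2
variable {p : ℕ} [Fact p.Prime]
variable {K : Type*} [NontriviallyNormedField K] [CompleteSpace K] [IsAlgClosed K]
  [Algebra ℚ_[p] K]

lemma aux_eval_norm (hnorm : ∀ x : ℚ_[p], ‖algebraMap ℚ_[p] K x‖ = ‖x‖)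
    (hna : ∀ x y : K, ‖x + y‖ ≤ max ‖x‖ ‖y‖)
    (f : PowerSeries ℤ_[p]) (l : ℕ)
    (hl : ‖PowerSeries.coeff l f‖ = 1)
    (hlt : ∀ n < l, ‖PowerSeries.coeff n f‖ < 1)
    (w : K) (hw0 : 0 < ‖w‖) (hw1 : ‖w‖ < 1) (hbig : (p : ℝ)⁻¹ < ‖w‖ ^ l) :
    ‖∑' n : ℕ, algebraMap ℚ_[p] K ((PowerSeries.coeff n f : ℤ_[p]) : ℚ_[p]) * w ^ n‖
      = ‖w‖ ^ l := by
  classical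
  set g : ℕ → K := fun n =>
    algebraMap ℚ_[p] K ((PowerSeries.coeff n f : ℤ_[p]) : ℚ_[p]) * w ^ n with hg
  have hsum : Summable g := aux_summable hnorm f w hw1
  have hnormg : ∀ n, ‖g n‖ = ‖PowerSeries.coeff n f‖ * ‖w‖ ^ n := by
    intro n
    rw [hg]
    simp only []
    rw [norm_mul, norm_pow, hnorm, ← PadicInt.norm_def]
  have hgl : ‖g l‖ = ‖w‖ ^ l := by rw [hnormg, hl, one_mul]
  have hrest : Summable fun n => ite (n = l) 0 (g n) := by
    refine Summable.of_norm_bounded (summable_geometric_of_lt_one (norm_nonneg w) hw1) ?_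
    intro n
    by_cases hn : n = l
    · simp [hn, pow_nonneg (norm_nonneg w) l]
    · rw [if_neg hn, hnormg]
      exact mul_le_of_le_one_left (pow_nonneg (norm_nonneg w) n) (PadicInt.norm_le_one _)
  have hc : max ((p : ℝ)⁻¹) (‖w‖ ^ (l + 1)) < ‖w‖ ^ l := by
    refine max_lt hbig ?_
    exact pow_lt_pow_right_of_lt_one₀ hw0 hw1 (Nat.lt_succ_self l)
  have hbound : ‖∑' n, ite (n = l) 0 (g n)‖ ≤ max ((p : ℝ)⁻¹) (‖w‖ ^ (l + 1)) := by
    refine aux_norm_tsum_le hna _ hrest _ ?_ ?_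
    · exact le_max_of_le_left (by positivity)
    · intro n
      rcases lt_trichotomy n l with h | h | h
      · rw [if_neg h.ne, hnormg]
        refine le_max_of_le_left ?_
        have h1 : ‖PowerSeries.coeff n f‖ ≤ (p : ℝ)⁻¹ := by
          have := (PadicInt.norm_le_pow_iff_norm_lt_pow_add_one
            (PowerSeries.coeff n f) (-1)).mpr (by simpa using hlt n h)
          simpa using this
        calc ‖PowerSeries.coeff n f‖ * ‖w‖ ^ n
            ≤ (p : ℝ)⁻¹ * 1 := by
              refine mul_le_mul h1 (pow_le_one₀ (norm_nonneg w) hw1.le) (by positivity) (by positivity)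
          _ = (p : ℝ)⁻¹ := mul_one _
      · simp [h]
      · rw [if_neg h.ne', hnormg]
        refine le_max_of_le_right ?_
        calc ‖PowerSeries.coeff n f‖ * ‖w‖ ^ n
            ≤ 1 * ‖w‖ ^ n := by
              refine mul_le_mul_of_nonneg_right (PadicInt.norm_le_one _) (by positivity)
          _ = ‖w‖ ^ n := one_mul _
          _ ≤ ‖w‖ ^ (l + 1) := pow_le_pow_of_le_one hw0.le hw1.le h
  rw [hsum.tsum_eq_add_tsum_ite l, aux_norm_add_eq hna (lt_of_le_of_lt hbound (hgl ▸ hc)), hgl]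

end Aux2

/-- Vanishing of the `μ`-invariant at break points.  Let `K` be a complete algebraically
closed nonarchimedean normed field extending `ℚ_p` isometrically (a model of `ℂ_p`), with
valuation `v z = -log_p ‖z‖`.  Let `a_i ∈ ℤ_p[[w]]` with `a 0 = 1`, indices
`i₀ < i₁ ≤ i₂` with `μ(a i₀) = 0` and `μ(a i₂) = 0` (i.e. `p ∤ a i₀`, `p ∤ a i₂`).
Suppose `r' > 0` is such that all roots of `a i₀`, `a i₁`, `a i₂` in the open unit disc
have valuation at least `r'`, and that for all `w₀` with `0 < v w₀ < r'` the slope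
inequality
`(v(a i₁(w₀)) − v(a i₀(w₀)))/(i₁ − i₀) ≤ (v(a i₂(w₀)) − v(a i₀(w₀)))/(i₂ − i₀)`
holds.  Then `μ(a i₁) = 0`, i.e. `p ∤ a i₁`. -/
theorem mu_zero_at_break_point
    (p : ℕ) [Fact p.Prime]
    (K : Type*) [NontriviallyNormedField K] [CompleteSpace K] [IsAlgClosed K]
    [Algebra ℚ_[p] K]
    (hnorm : ∀ x : ℚ_[p], ‖algebraMap ℚ_[p] K x‖ = ‖x‖)
    (hna : ∀ x y : K, ‖x + y‖ ≤ max ‖x‖ ‖y‖)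
    (a : ℕ → PowerSeries ℤ_[p]) (ha0 : a 0 = 1)
    (i₀ i₁ i₂ : ℕ) (h01 : i₀ < i₁) (h12 : i₁ ≤ i₂)
    (hmu0 : ¬ (p : PowerSeries ℤ_[p]) ∣ a i₀)
    (hmu2 : ¬ (p : PowerSeries ℤ_[p]) ∣ a i₂)
    (r' : ℝ) (hr' : 0 < r')
    (hroots : ∀ ℓ ∈ ({i₀, i₁, i₂} : Set ℕ), ∀ z : K, ‖z‖ < 1 →
      (∑' n : ℕ, algebraMap ℚ_[p] K ((PowerSeries.coeff n (a ℓ) : ℤ_[p]) : ℚ_[p]) * z ^ n)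
        = 0 → r' ≤ -Real.logb p ‖z‖)
    (hslope : ∀ w₀ : K, 0 < -Real.logb p ‖w₀‖ → -Real.logb p ‖w₀‖ < r' →
      (-Real.logb p
          ‖∑' n : ℕ, algebraMap ℚ_[p] K ((PowerSeries.coeff n (a i₁) : ℤ_[p]) : ℚ_[p]) * w₀ ^ n‖
        - -Real.logb p
          ‖∑' n : ℕ, algebraMap ℚ_[p] K ((PowerSeries.coeff n (a i₀) : ℤ_[p]) : ℚ_[p]) * w₀ ^ n‖)
        / ((i₁ : ℝ) - (i₀ : ℝ))
      ≤ (-Real.logb p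
          ‖∑' n : ℕ, algebraMap ℚ_[p] K ((PowerSeries.coeff n (a i₂) : ℤ_[p]) : ℚ_[p]) * w₀ ^ n‖
        - -Real.logb p
          ‖∑' n : ℕ, algebraMap ℚ_[p] K ((PowerSeries.coeff n (a i₀) : ℤ_[p]) : ℚ_[p]) * w₀ ^ n‖)
        / ((i₂ : ℝ) - (i₀ : ℝ))) :
    ¬ (p : PowerSeries ℤ_[p]) ∣ a i₁ := by
  classical
  intro hdvd
  have hp : 1 < (p : ℝ) := by exact_mod_cast (Fact.out : p.Prime).one_lt
  have hp0 : 0 < (p : ℝ) := lt_trans one_pos hp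
  -- minimal indices with unit coefficient
  have hex0 : ∃ n, ¬ (p : ℤ_[p]) ∣ PowerSeries.coeff n (a i₀) := by
    by_contra h; push_neg at h; exact hmu0 ((aux_dvd_iff _).mpr h)
  have hex2 : ∃ n, ¬ (p : ℤ_[p]) ∣ PowerSeries.coeff n (a i₂) := by
    by_contra h; push_neg at h; exact hmu2 ((aux_dvd_iff _).mpr h)
  set l0 := Nat.find hex0 with hl0def
  set l2 := Nat.find hex2 with hl2def
  have h0l : ‖PowerSeries.coeff l0 (a i₀)‖ = 1 := by
    refine le_antisymm (PadicInt.norm_le_one _) (le_of_not_gt fun h => ?_)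
    exact Nat.find_spec hex0 ((PadicInt.norm_lt_one_iff_dvd _).mp h)
  have h0lt : ∀ n < l0, ‖PowerSeries.coeff n (a i₀)‖ < 1 := fun n hn =>
    (PadicInt.norm_lt_one_iff_dvd _).mpr (not_not.mp (Nat.find_min hex0 hn))
  have h2l : ‖PowerSeries.coeff l2 (a i₂)‖ = 1 := by
    refine le_antisymm (PadicInt.norm_le_one _) (le_of_not_gt fun h => ?_)
    exact Nat.find_spec hex2 ((PadicInt.norm_lt_one_iff_dvd _).mp h)
  have h2lt : ∀ n < l2, ‖PowerSeries.coeff n (a i₂)‖ < 1 := fun n hn =>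
    (PadicInt.norm_lt_one_iff_dvd _).mpr (not_not.mp (Nat.find_min hex2 hn))
  -- choose N
  set N : ℕ := max (⌈1/r'⌉₊ + 1) (l0 + l2 + 1) with hNdef
  have hNpos : 0 < N := lt_of_lt_of_le (Nat.succ_pos _) (le_max_left _ _)
  have hNposR : 0 < (N : ℝ) := by exact_mod_cast hNpos
  have hl0N : l0 < N := lt_of_lt_of_le (by omega) (le_max_right _ _)
  have hl2N : l2 < N := lt_of_lt_of_le (by omega) (le_max_right _ _)
  have hNr : 1 / (N : ℝ) < r' := by
    have h1 : (1 : ℝ) / r' < N := by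
      refine lt_of_lt_of_le (lt_of_le_of_lt (Nat.le_ceil _) (lt_add_one _)) ?_
      have := le_max_left (⌈1/r'⌉₊ + 1) (l0 + l2 + 1)
      exact_mod_cast this
    rw [div_lt_iff₀ hNposR]
    calc (1 : ℝ) = r' * (1 / r') := by field_simp
      _ < r' * N := by exact mul_lt_mul_of_pos_left h1 hr'
  -- choose w with ‖w‖ = p^{-1/N}
  obtain ⟨w, hw⟩ := IsAlgClosed.exists_pow_nat_eq (algebraMap ℚ_[p] K ((p : ℚ_[p]))) hNpos
  have hwN : ‖w‖ ^ N = (p : ℝ)⁻¹ := by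
    rw [← norm_pow, hw, hnorm, Padic.norm_p]
  have hw0 : 0 < ‖w‖ := by
    rcases (norm_nonneg w).lt_or_eq with h | h
    · exact h
    · exfalso
      rw [← h, zero_pow hNpos.ne'] at hwN
      have : (0:ℝ) < (p : ℝ)⁻¹ := by positivity
      rw [← hwN] at this
      exact lt_irrefl _ this
  have hw1 : ‖w‖ < 1 := by
    by_contra h
    push_neg at h
    have h1 : (1 : ℝ) ≤ ‖w‖ ^ N := one_le_pow₀ h
    rw [hwN] at h1
    have : (p : ℝ)⁻¹ < 1 := by
      rw [inv_lt_one_iff₀]; right; exact hp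
    linarith
  have hlogw : Real.logb p ‖w‖ = -(1 / N) := by
    have h1 : (N : ℝ) * Real.logb p ‖w‖ = -1 := by
      rw [← Real.logb_pow, hwN, Real.logb_inv, Real.logb_self_eq_one hp]
    field_simp at h1 ⊢
    linarith
  have hv : -Real.logb p ‖w‖ = 1 / N := by rw [hlogw]; ring
  have hvpos : 0 < -Real.logb p ‖w‖ := by rw [hv]; positivity
  have hvlt : -Real.logb p ‖w‖ < r' := by rw [hv]; exact hNr
  -- evaluate norms
  have hbig0 : (p : ℝ)⁻¹ < ‖w‖ ^ l0 := by
    rw [← hwN]; exact pow_lt_pow_right_of_lt_one₀ hw0 hw1 hl0N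
  have hbig2 : (p : ℝ)⁻¹ < ‖w‖ ^ l2 := by
    rw [← hwN]; exact pow_lt_pow_right_of_lt_one₀ hw0 hw1 hl2N
  have hF0 : ‖∑' n : ℕ, algebraMap ℚ_[p] K ((PowerSeries.coeff n (a i₀) : ℤ_[p]) : ℚ_[p]) * w ^ n‖ = ‖w‖ ^ l0 :=
    aux_eval_norm hnorm hna (a i₀) l0 h0l h0lt w hw0 hw1 hbig0
  have hF2 : ‖∑' n : ℕ, algebraMap ℚ_[p] K ((PowerSeries.coeff n (a i₂) : ℤ_[p]) : ℚ_[p]) * w ^ n‖ = ‖w‖ ^ l2 :=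
    aux_eval_norm hnorm hna (a i₂) l2 h2l h2lt w hw0 hw1 hbig2
  have e0 : -Real.logb p (‖w‖ ^ l0) = l0 / N := by
    rw [Real.logb_pow, hlogw]; ring
  have e2 : -Real.logb p (‖w‖ ^ l2) = l2 / N := by
    rw [Real.logb_pow, hlogw]; ring
  -- the middle series
  set S1 := ∑' n : ℕ, algebraMap ℚ_[p] K ((PowerSeries.coeff n (a i₁) : ℤ_[p]) : ℚ_[p]) * w ^ n with hS1def
  by_cases hS1 : S1 = 0
  · exact absurd (hroots i₁ (by simp) w hw1 hS1) (not_le.mpr (hv ▸ hNr))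
  have hS1pos : 0 < ‖S1‖ := norm_pos_iff.mpr hS1
  have hS1le : ‖S1‖ ≤ (p : ℝ)⁻¹ := by
    refine aux_norm_tsum_le hna _ (aux_summable hnorm (a i₁) w hw1) _ (by positivity) ?_
    intro n
    have hc : ‖PowerSeries.coeff n (a i₁)‖ ≤ (p : ℝ)⁻¹ := by
      have hlt1 : ‖PowerSeries.coeff n (a i₁)‖ < 1 :=
        (PadicInt.norm_lt_one_iff_dvd _).mpr ((aux_dvd_iff _).mp hdvd n)
      have := (PadicInt.norm_le_pow_iff_norm_lt_pow_add_one
        (PowerSeries.coeff n (a i₁)) (-1)).mpr (by simpa using hlt1)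
      simpa using this
    rw [norm_mul, norm_pow, hnorm, ← PadicInt.norm_def]
    calc ‖PowerSeries.coeff n (a i₁)‖ * ‖w‖ ^ n
        ≤ (p : ℝ)⁻¹ * 1 :=
          mul_le_mul hc (pow_le_one₀ (norm_nonneg w) hw1.le) (by positivity) (by positivity)
      _ = (p : ℝ)⁻¹ := mul_one _
  have hv1 : 1 ≤ -Real.logb p ‖S1‖ := by
    have h1 : Real.logb p ‖S1‖ ≤ Real.logb p ((p : ℝ)⁻¹) :=
      (Real.logb_le_logb hp hS1pos (by positivity)).mpr hS1le
    rw [Real.logb_inv, Real.logb_self_eq_one hp] at h1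
    linarith
  -- slope inequality
  have A := hslope w hvpos hvlt
  rw [hF0, hF2, e0, e2, ← hS1def] at A
  -- arithmetic contradiction
  have d1pos : (0 : ℝ) < (i₁ : ℝ) - i₀ := by
    have : (i₀ : ℝ) < i₁ := by exact_mod_cast h01
    linarith
  have d2pos : (0 : ℝ) < (i₂ : ℝ) - i₀ := by
    have : (i₀ : ℝ) < i₂ := by exact_mod_cast lt_of_lt_of_le h01 h12
    linarith
  have d12 : (i₁ : ℝ) - i₀ ≤ (i₂ : ℝ) - i₀ := by
    have : (i₁ : ℝ) ≤ i₂ := by exact_mod_cast h12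
    linarith
  set v₁ := -Real.logb p ‖S1‖ with hv₁def
  have A' : (v₁ - l0 / N) * ((i₂ : ℝ) - i₀) ≤ (l2 / N - l0 / N) * ((i₁ : ℝ) - i₀) :=
    (div_le_div_iff₀ d1pos d2pos).mp A
  have hl0N' : (l0 : ℝ) / N < 1 := (div_lt_one hNposR).mpr (by exact_mod_cast hl0N)
  have hl2N' : (l2 : ℝ) / N < 1 := (div_lt_one hNposR).mpr (by exact_mod_cast hl2N)
  have hnn : 0 ≤ v₁ - l0 / N := by linarith
  have h2 : (v₁ - l0 / N) * ((i₁ : ℝ) - i₀) ≤ (v₁ - l0 / N) * ((i₂ : ℝ) - i₀) :=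
    mul_le_mul_of_nonneg_left d12 hnn
  have key : v₁ - l0 / N ≤ l2 / N - l0 / N :=
    le_of_mul_le_mul_right (h2.trans A') d1pos
  linarith
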